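/- Let Δ ⊂ ℝⁿ be compact and T(x) = argmax_{y ∈ Δ} x·y. Every limit point x* of a sequence generated by x_{i+1} ∈ T(x_i) is a fixed point of T, i.e., x* ∈ T(x*). -/

import Mathlib

theorem stmt2 {n : ℕ} (Δ : Set (EuclideanSpace ℝ (Fin n))) (hne : Δ.Nonempty)
    (hc : IsCompact Δ) (x : ℕ → EuclideanSpace ℝ (Fin n)) (hx0 : x 0 ∈ Δ)
    (hstep : ∀ i, x (i + 1) ∈ Δ ∧ ∀ y ∈ Δ, (inner ℝ (x i) y : ℝ) ≤ inner ℝ (x i) (x (i + 1)))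
    (xstar : EuclideanSpace ℝ (Fin n))
    (hlim : ∃ φ : ℕ → ℕ, StrictMono φ ∧
      Filter.Tendsto (fun k => x (φ k)) Filter.atTop (nhds xstar)) :
    xstar ∈ Δ ∧ ∀ y ∈ Δ, (inner ℝ xstar y : ℝ) ≤ inner ℝ xstar xstar := by
  obtain ⟨φ, hφ, htend⟩ := hlim
  have hmem : ∀ i, x i ∈ Δ := by
    intro i
    induction i with
    | zero => exact hx0
    | succ k ih => exact (hstep k).1
  -- norms are monotone
  have hstepnorm : ∀ i, ‖x i‖ ≤ ‖x (i + 1)‖ := by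
    intro i
    have h1 : (inner ℝ (x i) (x i) : ℝ) ≤ inner ℝ (x i) (x (i + 1)) :=
      (hstep i).2 (x i) (hmem i)
    have h2 : (inner ℝ (x i) (x (i + 1)) : ℝ) ≤ ‖x i‖ * ‖x (i + 1)‖ :=
      real_inner_le_norm _ _
    have h3 : ‖x i‖ * ‖x i‖ ≤ ‖x i‖ * ‖x (i + 1)‖ := by
      rw [← real_inner_self_eq_norm_mul_norm]; exact le_trans h1 h2
    rcases eq_or_lt_of_le (norm_nonneg (x i)) with h | h
    · rw [← h]; exact norm_nonneg _
    · exact le_of_mul_le_mul_left h3 h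
  have amono : Monotone fun i => ‖x i‖ := monotone_nat_of_le_succ hstepnorm
  have hnormtend : Filter.Tendsto (fun k => ‖x (φ k)‖) Filter.atTop (nhds ‖xstar‖) :=
    htend.norm
  have hsub : ∀ k, ‖x (φ k)‖ ≤ ‖xstar‖ :=
    Monotone.ge_of_tendsto (amono.comp hφ.monotone) hnormtend
  have hL : ∀ j, ‖x j‖ ≤ ‖xstar‖ := fun j =>
    le_trans (amono (hφ.le_apply)) (hsub j)
  have hstar : xstar ∈ Δ :=
    hc.isClosed.mem_of_tendsto htend (Filter.Eventually.of_forall fun k => hmem (φ k))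
  refine ⟨hstar, fun y hy => ?_⟩
  have hk : ∀ k, (inner ℝ (x (φ k)) y : ℝ) ≤ ‖xstar‖ * ‖xstar‖ := by
    intro k
    calc (inner ℝ (x (φ k)) y : ℝ) ≤ inner ℝ (x (φ k)) (x (φ k + 1)) :=
          (hstep (φ k)).2 y hy
      _ ≤ ‖x (φ k)‖ * ‖x (φ k + 1)‖ := real_inner_le_norm _ _
      _ ≤ ‖xstar‖ * ‖xstar‖ :=
          mul_le_mul (hL _) (hL _) (norm_nonneg _) (norm_nonneg _)
  have hinnertend : Filter.Tendsto (fun k => (inner ℝ (x (φ k)) y : ℝ)) Filter.atTop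
      (nhds (inner ℝ xstar y : ℝ)) := by
    exact Filter.Tendsto.inner htend tendsto_const_nhds
  have := le_of_tendsto hinnertend (Filter.Eventually.of_forall hk)
  rwa [← real_inner_self_eq_norm_mul_norm] at this
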